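/- arXiv:2502.03308 — 3 statements merged into one kernel-verified Lean document; each statement's English description precedes it below -/
import Mathlib

section
/- If a finite group G is a Frobenius group or a 2-Frobenius group, then Γ(G) is disconnected. -/
/-- The nilpotent neighborhood of `x`: elements `y` such that `⟨x,y⟩` is nilpotent. -/
def nilNbhd {G : Type*} [Group G] (x : G) : Set G :=
  {y | Group.IsNilpotent ↥(Subgroup.closure ({x, y} : Set G))}

/-- The hypercenter of a finite group: the stable term of the upper central series. -/
noncomputable def hypercenter (G : Type*) [Group G] : Subgroup G :=
  upperCentralSeries G (Nat.card G)

instance hypercenter_normal (G : Type*) [Group G] : (hypercenter G).Normal :=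
  inferInstanceAs (Subgroup.upperCentralSeries G (Nat.card G)).Normal

/-- The graph Γ(G): induced subgraph of the nilpotent graph on `G \ Z_∞(G)`. -/
def nilGraph (G : Type*) [Group G] : SimpleGraph {x : G // x ∉ hypercenter G} where
  Adj a b := a ≠ b ∧ Group.IsNilpotent ↥(Subgroup.closure ({a.1, b.1} : Set G))
  symm := ⟨fun a b ⟨h1, h2⟩ => ⟨h1.symm, by rwa [Set.pair_comm]⟩⟩
  loopless := ⟨fun a h => h.1 rfl⟩

/-- The commuting graph on the non-central elements. -/
def commGraph (G : Type*) [Group G] : SimpleGraph {x : G // x ∉ Subgroup.center G} where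
  Adj a b := a ≠ b ∧ a.1 * b.1 = b.1 * a.1
  symm := ⟨fun a b ⟨h1, h2⟩ => ⟨h1.symm, h2.symm⟩⟩
  loopless := ⟨fun a h => h.1 rfl⟩

/-- Diameter of a connected component: diameter of the induced subgraph on its support. -/
noncomputable def compDiam {V : Type*} (Γ : SimpleGraph V) (c : Γ.ConnectedComponent) : ℕ :=
  (Γ.induce c.supp).diam

/-- `H` is a Frobenius complement in `G`. -/
def IsFrobeniusComplement {G : Type*} [Group G] (H : Subgroup G) : Prop :=
  H ≠ ⊥ ∧ H ≠ ⊤ ∧ ∀ g : G, g ∉ H → H ⊓ H.map (MulAut.conj g).toMonoidHom = ⊥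

/-- `G` is a Frobenius group. -/
def IsFrobenius (G : Type*) [Group G] : Prop :=
  ∃ H : Subgroup G, IsFrobeniusComplement H

/-- `K` is the Frobenius kernel corresponding to the complement `H`. -/
def IsFrobeniusKernelOf {G : Type*} [Group G] (K H : Subgroup G) : Prop :=
  IsFrobeniusComplement H ∧
    (K : Set G) = {1} ∪ {x : G | ∀ g : G, x ∉ H.map (MulAut.conj g).toMonoidHom}

/-- `K` is a Frobenius kernel of `G`. -/
def IsFrobeniusKernel {G : Type*} [Group G] (K : Subgroup G) : Prop :=
  ∃ H : Subgroup G, IsFrobeniusKernelOf K H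

/-- `G` is a 2-Frobenius group. -/
def IsTwoFrobenius (G : Type*) [Group G] : Prop :=
  ∃ K L : Subgroup G, ∃ hK : K.Normal, L.Normal ∧ K ≤ L ∧
    IsFrobeniusKernel (K.subgroupOf L) ∧
    (haveI := hK; IsFrobeniusKernel (Subgroup.map (QuotientGroup.mk' K) L))

/-- The Fitting subgroup: the largest normal nilpotent subgroup (of a finite group). -/
def fitting (G : Type*) [Group G] : Subgroup G :=
  sSup {H : Subgroup G | H.Normal ∧ Group.IsNilpotent ↥H}

section AuxLemmas

open Subgroup

variable {G : Type*} [Group G]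

lemma mem_conjMap_iff {H : Subgroup G} {g x : G} :
    x ∈ H.map (MulAut.conj g).toMonoidHom ↔ g⁻¹ * x * g ∈ H := by
  rw [Subgroup.mem_map_equiv, MulAut.conj_symm_apply]

lemma conjMap_conjMap (H : Subgroup G) (t g : G) :
    (H.map (MulAut.conj g).toMonoidHom).map (MulAut.conj t).toMonoidHom
      = H.map (MulAut.conj (t * g)).toMonoidHom := by
  ext x
  simp only [mem_conjMap_iff, mul_inv_rev, mul_assoc]

lemma IsFrobeniusComplement.conjMap {H : Subgroup G} (hH : IsFrobeniusComplement H) (g : G) :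
    IsFrobeniusComplement (H.map (MulAut.conj g).toMonoidHom) := by
  obtain ⟨h1, h2, h3⟩ := hH
  have hinj : Function.Injective (MulAut.conj g).toMonoidHom := (MulAut.conj g).injective
  refine ⟨?_, ?_, ?_⟩
  · intro hb
    exact h1 ((Subgroup.map_eq_bot_iff_of_injective _ hinj).mp hb)
  · intro ht
    apply h2
    have := congrArg (Subgroup.comap (MulAut.conj g).toMonoidHom) ht
    rwa [Subgroup.comap_map_eq_self_of_injective hinj,
      Subgroup.comap_top] at this
  · intro t ht
    have htg : g⁻¹ * t * g ∉ H := by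
      intro hmem
      exact ht (mem_conjMap_iff.mpr (by simpa [mul_assoc] using hmem))
    have := h3 _ htg
    calc H.map (MulAut.conj g).toMonoidHom ⊓
          (H.map (MulAut.conj g).toMonoidHom).map (MulAut.conj t).toMonoidHom
        = H.map (MulAut.conj g).toMonoidHom ⊓
          (H.map (MulAut.conj (g⁻¹ * t * g)).toMonoidHom).map (MulAut.conj g).toMonoidHom := by
          rw [conjMap_conjMap, conjMap_conjMap]
          congr 2
          group
      _ = ((H ⊓ H.map (MulAut.conj (g⁻¹ * t * g)).toMonoidHom)).map
            (MulAut.conj g).toMonoidHom := by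
          rw [Subgroup.map_inf _ _ _ hinj]
      _ = ⊥ := by rw [this, Subgroup.map_bot]

/-- Key lemma: a nilpotent subgroup meeting a Frobenius complement nontrivially
is contained in it. -/
lemma nilpotent_le_complement {H N : Subgroup G} (hH : IsFrobeniusComplement H)
    (hN : Group.IsNilpotent ↥N) {x : G} (hxN : x ∈ N) (hxH : x ∈ H) (hx1 : x ≠ 1) :
    N ≤ H := by
  haveI := hN
  have hnc : NormalizerCondition ↥N := normalizerCondition_of_isNilpotent
  by_contra hle
  have hM : H.subgroupOf N < ⊤ := lt_top_iff_ne_top.mpr fun e =>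
    hle (Subgroup.subgroupOf_eq_top.mp e)
  obtain ⟨n, hn_norm, hn_mem⟩ := SetLike.exists_of_lt (hnc _ hM)
  have hxM : (⟨x, hxN⟩ : ↥N) ∈ H.subgroupOf N := Subgroup.mem_subgroupOf.mpr hxH
  have h2 : n * ⟨x, hxN⟩ * n⁻¹ ∈ H.subgroupOf N :=
    (Subgroup.mem_normalizer_iff.mp hn_norm _).mp hxM
  have hc1 : (n : G) * x * (n : G)⁻¹ ∈ H := by
    simpa [Subgroup.mem_subgroupOf] using h2
  have hnH : (n : G) ∉ H := fun h => hn_mem (Subgroup.mem_subgroupOf.mpr h)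
  have hc2 : (n : G) * x * (n : G)⁻¹ ∈ H.map (MulAut.conj (n : G)).toMonoidHom :=
    mem_conjMap_iff.mpr (by simpa [mul_assoc] using hxH)
  have hbot : (n : G) * x * (n : G)⁻¹ ∈ (⊥ : Subgroup G) := by
    rw [← hH.2.2 _ hnH]; exact Subgroup.mem_inf.mpr ⟨hc1, hc2⟩
  rw [Subgroup.mem_bot] at hbot
  apply hx1
  have := congrArg (fun w => (n : G)⁻¹ * w * (n : G)) hbot
  simpa [mul_assoc] using this

lemma center_eq_bot_of_complement {H : Subgroup G} (hH : IsFrobeniusComplement H) :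
    Subgroup.center G = ⊥ := by
  rw [eq_bot_iff]
  intro z hz
  rw [Subgroup.mem_bot]
  by_contra hz1
  rw [Subgroup.mem_center_iff] at hz
  by_cases hzH : z ∈ H
  · obtain ⟨g, hg⟩ : ∃ g, g ∉ H := by
      by_contra hcon; push_neg at hcon
      exact hH.2.1 ((Subgroup.eq_top_iff' H).mpr hcon)
    have h1 : z ∈ H.map (MulAut.conj g).toMonoidHom := by
      rw [mem_conjMap_iff]
      have : g⁻¹ * z * g = z := by rw [mul_assoc, ← hz g]; group
      rwa [this]
    have : z ∈ (⊥ : Subgroup G) := by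
      rw [← hH.2.2 g hg]; exact Subgroup.mem_inf.mpr ⟨hzH, h1⟩
    exact hz1 (Subgroup.mem_bot.mp this)
  · have h1 : H.map (MulAut.conj z).toMonoidHom = H := by
      ext x
      rw [mem_conjMap_iff]
      have : z⁻¹ * x * z = x := by rw [mul_assoc, hz x]; group
      rw [this]
    have := hH.2.2 z hzH
    rw [h1, inf_idem] at this
    exact hH.1 this

lemma hypercenter_eq_bot_of_center (hc : Subgroup.center G = ⊥) : hypercenter G = ⊥ := by
  have key : ∀ n, Subgroup.upperCentralSeries G n = ⊥ := by
    intro n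
    induction n with
    | zero => exact Subgroup.upperCentralSeries_zero G
    | succ n ih =>
      rw [eq_bot_iff]
      intro x hx
      rw [Subgroup.mem_upperCentralSeries_succ_iff] at hx
      have : x ∈ Subgroup.center G := by
        rw [Subgroup.mem_center_iff]
        intro g
        have := hx g
        rw [ih, Subgroup.mem_bot] at this
        have h2 := congrArg (fun w => w * g * x) this
        simpa [mul_assoc, commutatorElement_def] using h2.symm
      rwa [hc] at this
  exact key _

lemma walk_ind {V : Type*} {Γ : SimpleGraph V} (P : V → Prop)
    (hP : ∀ a b, Γ.Adj a b → P a → P b) : ∀ {u v : V}, Γ.Walk u v → P u → P v := by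
  intro u v w
  induction w with
  | nil => exact id
  | cons h _ ih => exact fun hu => ih (hP _ _ h hu)

lemma mk_mem_map_mk'_iff {K L : Subgroup G} [K.Normal] (hKL : K ≤ L) {x : G} :
    (QuotientGroup.mk' K) x ∈ L.map (QuotientGroup.mk' K) ↔ x ∈ L := by
  constructor
  · rintro ⟨l, hl, he⟩
    have h1 : l⁻¹ * x ∈ K := QuotientGroup.eq.mp he
    have := L.mul_mem hl (hKL h1)
    simpa [mul_assoc] using this
  · intro h; exact ⟨x, h, rfl⟩

lemma map_closure_pair {G' : Type*} [Group G'] (f : G →* G') (v w : G) :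
    (Subgroup.closure {v, w}).map f = Subgroup.closure {f v, f w} := by
  rw [MonoidHom.map_closure, Set.image_pair]

lemma nilpotent_map {G' : Type*} [Group G'] (f : G →* G') (N : Subgroup G)
    (h : Group.IsNilpotent ↥N) : Group.IsNilpotent ↥(N.map f) :=
  haveI := h
  nilpotent_of_surjective (f.subgroupMap N) (f.subgroupMap_surjective N)

lemma nilpotent_of_map_subtype {L : Subgroup G} (N : Subgroup ↥L)
    (h : Group.IsNilpotent ↥(N.map L.subtype)) : Group.IsNilpotent ↥N :=
  haveI := h
  nilpotent_of_mulEquiv (Subgroup.equivMapOfInjective N L.subtype L.subtype_injective).symm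

end AuxLemmas

/-- Frobenius and 2-Frobenius groups have disconnected Γ(G). -/
theorem stmt_12 (G : Type*) [Group G] [Finite G]
    (h : IsFrobenius G ∨ IsTwoFrobenius G) :
    ¬ (nilGraph G).Preconnected := by
  intro hcon
  rcases h with ⟨H, hH⟩ | ⟨K, L, hK, hL, hKL, ⟨Ht, hHt, hset1⟩, ⟨Hb, hHb, hset2⟩⟩
  · -- Frobenius case
    have hz : hypercenter G = ⊥ := hypercenter_eq_bot_of_center (center_eq_bot_of_complement hH)
    have hne1 : ∀ v : {x : G // x ∉ hypercenter G}, v.1 ≠ 1 := by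
      intro v hv
      apply v.2
      have hm : v.1 ∈ (⊥ : Subgroup G) := Subgroup.mem_bot.mpr hv
      rwa [← hz] at hm
    have step : ∀ a b, (nilGraph G).Adj a b → a.1 ∈ H → b.1 ∈ H := by
      intro a b hab ha
      exact nilpotent_le_complement hH (show a ≠ b ∧ _ from hab).2
        (Subgroup.subset_closure (Set.mem_insert _ _)) ha (hne1 a)
        (Subgroup.subset_closure (Set.mem_insert_of_mem _ rfl))
    obtain ⟨x, hxH, hx1⟩ : ∃ x ∈ H, x ≠ (1 : G) := by
      rcases H.bot_or_exists_ne_one with h0 | h0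
      · exact absurd h0 hH.1
      · exact h0
    obtain ⟨g, hg⟩ : ∃ g, g ∉ H := by
      by_contra hcon'; push_neg at hcon'
      exact hH.2.1 ((Subgroup.eq_top_iff' H).mpr hcon')
    have hxv : x ∉ hypercenter G := by rw [hz, Subgroup.mem_bot]; exact hx1
    have hy1 : g * x * g⁻¹ ≠ 1 := by
      intro e; apply hx1
      have := congrArg (fun w => g⁻¹ * w * g) e
      simpa [mul_assoc] using this
    have hyv : g * x * g⁻¹ ∉ hypercenter G := by rw [hz, Subgroup.mem_bot]; exact hy1
    obtain ⟨w⟩ := hcon ⟨x, hxv⟩ ⟨g * x * g⁻¹, hyv⟩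
    have hP : g * x * g⁻¹ ∈ H := walk_ind (fun v => v.1 ∈ H) step w hxH
    have h2 : g * x * g⁻¹ ∈ H.map (MulAut.conj g).toMonoidHom :=
      mem_conjMap_iff.mpr (by simpa [mul_assoc] using hxH)
    have hb : g * x * g⁻¹ ∈ (⊥ : Subgroup G) := by
      rw [← hH.2.2 g hg]; exact Subgroup.mem_inf.mpr ⟨hP, h2⟩
    exact hy1 (Subgroup.mem_bot.mp hb)
  · -- 2-Frobenius case
    haveI := hK
    have hcL : Subgroup.center ↥L = ⊥ := center_eq_bot_of_complement hHt
    have hcQ : Subgroup.center (G ⧸ K) = ⊥ := center_eq_bot_of_complement hHb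
    have hcG : Subgroup.center G = ⊥ := by
      rw [eq_bot_iff]; intro z hz'; rw [Subgroup.mem_bot]
      rw [Subgroup.mem_center_iff] at hz'
      by_cases hzL : z ∈ L
      · have hmem : (⟨z, hzL⟩ : ↥L) ∈ Subgroup.center ↥L :=
          Subgroup.mem_center_iff.mpr (fun g => Subtype.ext (hz' g.1))
        rw [hcL, Subgroup.mem_bot] at hmem
        exact congrArg Subtype.val hmem
      · exfalso
        have hmem : ((z : G) : G ⧸ K) ∈ Subgroup.center (G ⧸ K) := by
          rw [Subgroup.mem_center_iff]
          intro q
          induction q using QuotientGroup.induction_on with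
          | _ g => rw [← QuotientGroup.mk_mul, ← QuotientGroup.mk_mul, hz' g]
        rw [hcQ, Subgroup.mem_bot] at hmem
        exact hzL (hKL ((QuotientGroup.eq_one_iff z).mp hmem))
    have hz : hypercenter G = ⊥ := hypercenter_eq_bot_of_center hcG
    have hne1 : ∀ v : {x : G // x ∉ hypercenter G}, v.1 ≠ 1 := by
      intro v hv
      apply v.2
      have hm : v.1 ∈ (⊥ : Subgroup G) := Subgroup.mem_bot.mpr hv
      rwa [← hz] at hm
    have hKsub : ∀ w : ↥L, w ∈ K.subgroupOf L → w ≠ 1 →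
        ∀ g : ↥L, w ∉ Ht.map (MulAut.conj g).toMonoidHom := by
      intro w hw hw1
      have hmem : w ∈ ((K.subgroupOf L : Subgroup ↥L) : Set ↥L) := hw
      rw [hset1] at hmem
      rcases hmem with h1 | h2
      · exact absurd h1 hw1
      · exact h2
    have hQsub : ∀ q : G ⧸ K, q ∈ Subgroup.map (QuotientGroup.mk' K) L → q ≠ 1 →
        ∀ g : G ⧸ K, q ∉ Hb.map (MulAut.conj g).toMonoidHom := by
      intro q hq hq1
      have hmem : q ∈ ((Subgroup.map (QuotientGroup.mk' K) L : Subgroup (G ⧸ K)) :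
          Set (G ⧸ K)) := hq
      rw [hset2] at hmem
      rcases hmem with h1 | h2
      · exact absurd h1 hq1
      · exact h2
    have hQout : ∀ q : G ⧸ K, q ∉ Subgroup.map (QuotientGroup.mk' K) L →
        q ≠ 1 ∧ ∃ g : G ⧸ K, q ∈ Hb.map (MulAut.conj g).toMonoidHom := by
      intro q hq
      constructor
      · intro e; apply hq; rw [e]; exact Subgroup.one_mem _
      · by_contra hcon'; push_neg at hcon'
        apply hq
        show q ∈ ((Subgroup.map (QuotientGroup.mk' K) L : Subgroup (G ⧸ K)) : Set (G ⧸ K))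
        rw [hset2]; right; exact hcon'
    have step : ∀ a b, (nilGraph G).Adj a b →
        a.1 ∈ Ht.map L.subtype → b.1 ∈ Ht.map L.subtype := by
      intro a b hab ha
      obtain ⟨aa, haaHt, hae⟩ := ha
      have haL : a.1 ∈ L := hae ▸ aa.2
      have haa1 : aa ≠ 1 := by
        intro e; apply hne1 a; rw [← hae, e]; rfl
      have haK : a.1 ∉ K := by
        intro hk
        have hmem : aa ∈ K.subgroupOf L := Subgroup.mem_subgroupOf.mpr (by show L.subtype aa ∈ K; rw [hae]; exact hk)
        exact hKsub aa hmem haa1 1 (mem_conjMap_iff.mpr (by simpa using haaHt))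
      have hbL : b.1 ∈ L := by
        by_contra hbL
        have hnil : Group.IsNilpotent
            ↥(Subgroup.closure {QuotientGroup.mk' K a.1, QuotientGroup.mk' K b.1}) := by
          rw [← map_closure_pair (QuotientGroup.mk' K)]
          exact nilpotent_map _ _ (show a ≠ b ∧ _ from hab).2
        have hbQ : QuotientGroup.mk' K b.1 ∉ Subgroup.map (QuotientGroup.mk' K) L := by
          intro hm; exact hbL ((mk_mem_map_mk'_iff hKL).mp hm)
        obtain ⟨hbne, g, hbin⟩ := hQout _ hbQ
        have hle := nilpotent_le_complement (hHb.conjMap g) hnil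
          (Subgroup.subset_closure (Set.mem_insert_of_mem _ rfl)) hbin hbne
        have haQin := hle (Subgroup.subset_closure (Set.mem_insert _ _))
        have haQL : QuotientGroup.mk' K a.1 ∈ Subgroup.map (QuotientGroup.mk' K) L :=
          (mk_mem_map_mk'_iff hKL).mpr haL
        have haQne : QuotientGroup.mk' K a.1 ≠ 1 := fun e =>
          haK ((QuotientGroup.eq_one_iff _).mp e)
        exact hQsub _ haQL haQne g haQin
      have hnil' : Group.IsNilpotent
          ↥(Subgroup.closure {(⟨a.1, haL⟩ : ↥L), ⟨b.1, hbL⟩}) := by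
        apply nilpotent_of_map_subtype
        rw [map_closure_pair]
        exact (show a ≠ b ∧ _ from hab).2
      have haHt' : (⟨a.1, haL⟩ : ↥L) ∈ Ht := by
        have he : (⟨a.1, haL⟩ : ↥L) = aa := Subtype.ext hae.symm
        rw [he]; exact haaHt
      have ha1' : (⟨a.1, haL⟩ : ↥L) ≠ 1 := by
        intro e; exact hne1 a (congrArg Subtype.val e)
      have hle := nilpotent_le_complement hHt hnil'
        (Subgroup.subset_closure (Set.mem_insert _ _)) haHt' ha1'
      exact ⟨⟨b.1, hbL⟩, hle (Subgroup.subset_closure (Set.mem_insert_of_mem _ rfl)), rfl⟩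
    obtain ⟨xx, hxxHt, hxx1⟩ : ∃ x ∈ Ht, x ≠ (1 : ↥L) := by
      rcases Ht.bot_or_exists_ne_one with h0 | h0
      · exact absurd h0 hHt.1
      · exact h0
    obtain ⟨tt, htt⟩ : ∃ l : ↥L, l ∉ Ht := by
      by_contra hcon'; push_neg at hcon'
      exact hHt.2.1 ((Subgroup.eq_top_iff' Ht).mpr hcon')
    have hx1 : (xx : G) ≠ 1 := fun e => hxx1 (Subtype.ext e)
    have hy1 : ((tt * xx * tt⁻¹ : ↥L) : G) ≠ 1 := by
      intro e
      have he : tt * xx * tt⁻¹ = 1 := Subtype.ext e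
      apply hxx1
      have := congrArg (fun w => tt⁻¹ * w * tt) he
      simpa [mul_assoc] using this
    have hxv : (xx : G) ∉ hypercenter G := by rw [hz, Subgroup.mem_bot]; exact hx1
    have hyv : ((tt * xx * tt⁻¹ : ↥L) : G) ∉ hypercenter G := by
      rw [hz, Subgroup.mem_bot]; exact hy1
    obtain ⟨w⟩ := hcon ⟨_, hxv⟩ ⟨_, hyv⟩
    have hP := walk_ind (fun v => v.1 ∈ Ht.map L.subtype) step w ⟨xx, hxxHt, rfl⟩
    obtain ⟨c, hcHt, hce⟩ := hP
    have hc : c = tt * xx * tt⁻¹ := L.subtype_injective hce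
    rw [hc] at hcHt
    have h2 : tt * xx * tt⁻¹ ∈ Ht.map (MulAut.conj tt).toMonoidHom :=
      mem_conjMap_iff.mpr (by simpa [mul_assoc] using hxxHt)
    have hb : tt * xx * tt⁻¹ ∈ (⊥ : Subgroup ↥L) := by
      rw [← hHt.2.2 tt htt]; exact Subgroup.mem_inf.mpr ⟨hcHt, h2⟩
    rw [Subgroup.mem_bot] at hb
    apply hxx1
    have := congrArg (fun w => tt⁻¹ * w * tt) hb
    simpa [mul_assoc] using this
end

section
/- Let G be a finite group with trivial center. Then Γ(G) is connected if and only if the commuting graph Γ_comm(G) is connected. Moreover, if Γ(G) is connected of diameter k, then the diameter of Γ_comm(G) is at most 2k. -/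
section Aux

variable {G : Type*} [Group G]

lemma ucs_eq_bot_of_center_eq_bot (hZ : Subgroup.center G = ⊥) :
    ∀ n, upperCentralSeries G n = ⊥ := by
  intro n
  induction n with
  | zero => exact upperCentralSeries_zero G
  | succ n ih =>
    ext x
    simp only [Subgroup.mem_bot]
    constructor
    · intro hx
      have hc : x ∈ Subgroup.center G := by
        rw [Subgroup.mem_center_iff]
        intro y
        have h := (mem_upperCentralSeries_succ_iff).mp hx y
        rw [show Subgroup.upperCentralSeries G n = ⊥ from ih, Subgroup.mem_bot] at h
        have h2 : x * y * x⁻¹ = y := by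
          have := mul_eq_one_iff_eq_inv.mp h
          rw [this]; group
        calc y * x = (x * y * x⁻¹) * x := by rw [h2]
        _ = x * y := by group
      rw [hZ, Subgroup.mem_bot] at hc
      exact hc
    · rintro rfl; exact Subgroup.one_mem _

lemma center_ne_bot_of_nilpotent (G : Type*) [Group G] [Group.IsNilpotent G] [Nontrivial G] :
    Subgroup.center G ≠ ⊥ := by
  intro h
  have htop := upperCentralSeries_nilpotencyClass (G := G)
  rw [show Subgroup.upperCentralSeries G (Group.nilpotencyClass G) = ⊥ from
    ucs_eq_bot_of_center_eq_bot h _] at htop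
  obtain ⟨a, b, hab⟩ := exists_pair_ne G
  have ha : a ∈ (⊥ : Subgroup G) := htop ▸ Subgroup.mem_top a
  have hb : b ∈ (⊥ : Subgroup G) := htop ▸ Subgroup.mem_top b
  rw [Subgroup.mem_bot] at ha hb
  exact hab (ha.trans hb.symm)

lemma nil_of_comm {x y : G} (h : x * y = y * x) :
    Group.IsNilpotent ↥(Subgroup.closure ({x, y} : Set G)) := by
  letI : CommGroup ↥(Subgroup.closure ({x, y} : Set G)) :=
    Subgroup.closureCommGroupOfComm (by
      simp only [Set.mem_insert_iff, Set.mem_singleton_iff]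
      rintro a (rfl | rfl) b (rfl | rfl) <;> first | rfl | exact h | exact h.symm)
  infer_instance

lemma exists_common_comm {x y : G} (hx : x ≠ 1)
    (h : Group.IsNilpotent ↥(Subgroup.closure ({x, y} : Set G))) :
    ∃ z : G, z ≠ 1 ∧ z * x = x * z ∧ z * y = y * z := by
  set H := Subgroup.closure ({x, y} : Set G) with hH
  have hxH : x ∈ H := Subgroup.subset_closure (by simp)
  have hyH : y ∈ H := Subgroup.subset_closure (by simp)
  haveI : Nontrivial H := ⟨⟨⟨x, hxH⟩, 1, by simpa using hx⟩⟩
  have hc := center_ne_bot_of_nilpotent H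
  obtain ⟨z, hz⟩ := Subgroup.ne_bot_iff_exists_ne_one.mp hc
  refine ⟨((z : H) : G), ?_, ?_, ?_⟩
  · intro h1
    apply hz
    ext
    exact h1
  · exact congrArg Subtype.val (Subgroup.mem_center_iff.mp z.2 ⟨x, hxH⟩).symm
  · exact congrArg Subtype.val (Subgroup.mem_center_iff.mp z.2 ⟨y, hyH⟩).symm

end Aux

/-- For a centerless group, Γ(G) is connected iff the commuting graph is, and the
diameter of the commuting graph is at most twice that of Γ(G). -/

theorem stmt_13 (G : Type*) [Group G] [Finite G] (hZ : Subgroup.center G = ⊥) :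
    ((nilGraph G).Connected ↔ (commGraph G).Connected) ∧
      ∀ k : ℕ, (nilGraph G).Connected → (nilGraph G).diam = k →
        (commGraph G).diam ≤ 2 * k := by
  have h1 : hypercenter G = ⊥ := ucs_eq_bot_of_center_eq_bot hZ _
  let e : {x : G // x ∉ hypercenter G} ≃ {x : G // x ∉ Subgroup.center G} :=
    Equiv.subtypeEquiv (Equiv.refl G) (fun x => by rw [h1, hZ]; exact Iff.rfl)
  have hvne : ∀ a : {x : G // x ∉ hypercenter G}, a.1 ≠ 1 := by
    intro a h
    exact a.2 (h ▸ Subgroup.one_mem _)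
  -- comm adjacency transfers to nil adjacency
  have ca : ∀ u v : {x : G // x ∉ Subgroup.center G}, (commGraph G).Adj u v →
      (nilGraph G).Adj (e.symm u) (e.symm v) := by
    intro u v h
    obtain ⟨hne, hcomm⟩ := h
    refine ⟨fun h => hne (by simpa using congrArg e h), ?_⟩
    exact nil_of_comm hcomm
  -- nil adjacency gives comm edist ≤ 2
  have nc : ∀ a b, (nilGraph G).Adj a b → (commGraph G).edist (e a) (e b) ≤ 2 := by
    intro a b h
    obtain ⟨hne, hnil⟩ := h
    obtain ⟨z, hz1, hzx, hzy⟩ := exists_common_comm (hvne a) hnil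
    have hzc : z ∉ Subgroup.center G := by
      rw [hZ, Subgroup.mem_bot]; exact hz1
    have heab : e a ≠ e b := fun h => hne (e.injective h)
    rcases eq_or_ne z a.1 with hza | hza
    · have hadj : (commGraph G).Adj (e a) (e b) := by
        refine ⟨heab, ?_⟩
        show a.1 * b.1 = b.1 * a.1
        rw [← hza]; exact hzy
      exact le_trans (SimpleGraph.edist_eq_one_iff_adj.mpr hadj).le one_le_two
    rcases eq_or_ne z b.1 with hzb | hzb
    · have hadj : (commGraph G).Adj (e a) (e b) := by
        refine ⟨heab, ?_⟩
        show a.1 * b.1 = b.1 * a.1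
        rw [← hzb]; exact hzx.symm
      exact le_trans (SimpleGraph.edist_eq_one_iff_adj.mpr hadj).le one_le_two
    · have h1adj : (commGraph G).Adj (e a) (⟨z, hzc⟩ : {x : G // x ∉ Subgroup.center G}) := by
        refine ⟨fun h => hza (congrArg Subtype.val h).symm, ?_⟩
        show a.1 * z = z * a.1
        exact hzx.symm
      have h2adj : (commGraph G).Adj (⟨z, hzc⟩ : {x : G // x ∉ Subgroup.center G}) (e b) := by
        refine ⟨fun h => hzb (congrArg Subtype.val h), ?_⟩
        show z * b.1 = b.1 * z
        exact hzy
      calc (commGraph G).edist (e a) (e b)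
          ≤ (commGraph G).edist (e a) ⟨z, hzc⟩ + (commGraph G).edist ⟨z, hzc⟩ (e b) :=
            SimpleGraph.edist_triangle
        _ ≤ 1 + 1 := add_le_add (SimpleGraph.edist_eq_one_iff_adj.mpr h1adj).le
            (SimpleGraph.edist_eq_one_iff_adj.mpr h2adj).le
        _ = 2 := one_add_one_eq_two
  have step_nc : ∀ {a b}, (nilGraph G).Adj a b → (commGraph G).Reachable (e a) (e b) := by
    intro a b h
    apply SimpleGraph.reachable_of_edist_ne_top
    intro ht
    have h2 := nc a b h
    rw [ht] at h2
    simp at h2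
  have reach_nc : ∀ {a b}, (nilGraph G).Reachable a b → (commGraph G).Reachable (e a) (e b) := by
    intro a b hr
    obtain ⟨w⟩ := hr
    induction w with
    | nil => exact SimpleGraph.Reachable.refl _
    | cons h q ih => exact (step_nc h).trans ih
  have reach_cn : ∀ {u v}, (commGraph G).Reachable u v →
      (nilGraph G).Reachable (e.symm u) (e.symm v) := by
    intro u v hr
    obtain ⟨w⟩ := hr
    induction w with
    | nil => exact SimpleGraph.Reachable.refl _
    | cons h q ih => exact ((ca _ _ h).reachable).trans ih
  have walkbound : ∀ (a b : _) (p : (nilGraph G).Walk a b),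
      (commGraph G).edist (e a) (e b) ≤ 2 * (p.length : ℕ∞) := by
    intro a b p
    induction p with
    | nil => simp
    | @cons a c b h q ih =>
      calc (commGraph G).edist (e a) (e b)
          ≤ (commGraph G).edist (e a) (e c) + (commGraph G).edist (e c) (e b) :=
            SimpleGraph.edist_triangle
        _ ≤ 2 + 2 * (q.length : ℕ∞) := add_le_add (nc _ _ h) ih
        _ = 2 * ((q.length + 1 : ℕ) : ℕ∞) := by push_cast; ring
        _ = 2 * (((SimpleGraph.Walk.cons h q).length : ℕ) : ℕ∞) := by
            rw [SimpleGraph.Walk.length_cons]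
  constructor
  · constructor
    · intro hc
      rw [SimpleGraph.connected_iff] at hc ⊢
      refine ⟨fun u v => ?_, ⟨e hc.2.some⟩⟩
      have := reach_nc (hc.1 (e.symm u) (e.symm v))
      simpa using this
    · intro hc
      rw [SimpleGraph.connected_iff] at hc ⊢
      refine ⟨fun a b => ?_, ⟨e.symm hc.2.some⟩⟩
      have := reach_cn (hc.1 (e a) (e b))
      simpa using this
  · intro k hc hk
    haveI : Nonempty {x : G // x ∉ hypercenter G} := hc.nonempty
    have hnetop : (nilGraph G).ediam ≠ ⊤ := by
      obtain ⟨u, v, huv⟩ := SimpleGraph.exists_edist_eq_ediam_of_finite (G := nilGraph G)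
      rw [← huv]
      exact SimpleGraph.edist_ne_top_iff_reachable.mpr (hc.preconnected u v)
    have hb : (commGraph G).ediam ≤ ((2 * k : ℕ) : ℕ∞) := by
      apply SimpleGraph.ediam_le_of_edist_le
      intro u v
      obtain ⟨p, hp⟩ := hc.exists_walk_length_eq_dist (e.symm u) (e.symm v)
      have h2 := walkbound _ _ p
      rw [Equiv.apply_symm_apply, Equiv.apply_symm_apply] at h2
      have hlen : p.length ≤ k := by
        rw [hp, ← hk]
        exact SimpleGraph.dist_le_diam hnetop
      calc (commGraph G).edist u v ≤ 2 * (p.length : ℕ∞) := h2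
        _ ≤ ((2 * k : ℕ) : ℕ∞) := by
            push_cast
            exact mul_le_mul_right (by exact_mod_cast hlen) 2
    calc (commGraph G).diam = (commGraph G).ediam.toNat := rfl
      _ ≤ ((2 * k : ℕ) : ℕ∞).toNat := ENat.toNat_le_toNat hb (ENat.coe_ne_top _)
      _ = 2 * k := ENat.toNat_coe _
end

section
/- Let G be a finite solvable group with trivial center such that every prime dividing |G| divides |Fit(G)| and such that Γ(G) is connected. Then the diameter of Γ(G) is at most 5. -/
open Subgroup

section AuxNil

variable {G : Type*} [Group G]

lemma aux_nil_of_le {H K : Subgroup G} (h : H ≤ K) (hK : Group.IsNilpotent ↥K) :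
    Group.IsNilpotent ↥H :=
  haveI := hK
  (Group.isNilpotent_congr (Subgroup.subgroupOfEquivOfLe h)).mp inferInstance

lemma aux_nil_closure_pair_of_commute {a b : G} (h : a * b = b * a) :
    Group.IsNilpotent ↥(Subgroup.closure ({a, b} : Set G)) := by
  letI : CommGroup ↥(Subgroup.closure ({a, b} : Set G)) :=
    Subgroup.closureCommGroupOfComm (k := ({a, b} : Set G)) (by
      intro x hx y hy
      simp only [Set.mem_insert_iff, Set.mem_singleton_iff] at hx hy
      rcases hx with rfl | rfl <;> rcases hy with rfl | rfl
      · rfl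
      · exact h
      · exact h.symm
      · rfl)
  infer_instance

lemma aux_card_sup_dvd [Finite G] (H N : Subgroup G) [N.Normal] :
    Nat.card ↥(H ⊔ N) ∣ Nat.card H * Nat.card N := by
  have h1 := Subgroup.card_eq_card_quotient_mul_card_subgroup (N.subgroupOf (H ⊔ N))
  have h2 : Nat.card (N.subgroupOf (H ⊔ N)) = Nat.card N :=
    Nat.card_congr (Subgroup.subgroupOfEquivOfLe le_sup_right).toEquiv
  have h3 : Nat.card (↥(H ⊔ N) ⧸ N.subgroupOf (H ⊔ N)) = Nat.card (↥H ⧸ N.subgroupOf H) :=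
    Nat.card_congr (QuotientGroup.quotientInfEquivProdNormalQuotient H N).toEquiv.symm
  have h4 : Nat.card (↥H ⧸ N.subgroupOf H) ∣ Nat.card H :=
    Subgroup.card_quotient_dvd_card _
  rw [h1, h2, h3]
  exact mul_dvd_mul h4 dvd_rfl

lemma aux_sSup_prime_dvd [Finite G] {S : Set (Subgroup G)} (hS : ∀ N ∈ S, N.Normal)
    {p : ℕ} (hp : p.Prime) (hdvd : p ∣ Nat.card ↥(sSup S)) :
    ∃ N ∈ S, p ∣ Nat.card ↥N := by
  have hfin : S.Finite := Set.toFinite S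
  revert hS hdvd
  refine Set.Finite.induction_on
    (motive := fun (s : Set (Subgroup G)) _ => (∀ N ∈ s, N.Normal) → (p ∣ Nat.card ↥(sSup s : Subgroup G)) → ∃ N ∈ s, p ∣ Nat.card ↥(N : Subgroup G))
    S hfin ?_ ?_
  · intro _ hdvd
    rw [sSup_empty] at hdvd
    have : Nat.card ↥(⊥ : Subgroup G) = 1 := Subgroup.card_bot
    rw [this] at hdvd
    exact absurd (Nat.dvd_one.mp hdvd) hp.one_lt.ne'
  · rintro N s hNs hsfin ih hnorm hdvd
    haveI hNn : N.Normal := hnorm N (Set.mem_insert _ _)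
    rw [sSup_insert, sup_comm] at hdvd
    have hdvd2 : p ∣ Nat.card ↥(sSup s) * Nat.card N :=
      hdvd.trans (aux_card_sup_dvd (sSup s) N)
    rcases (Nat.Prime.dvd_mul hp).mp hdvd2 with h | h
    · obtain ⟨M, hM, hMp⟩ := ih (fun M hM => hnorm M (Set.mem_insert_of_mem _ hM)) h
      exact ⟨M, Set.mem_insert_of_mem _ hM, hMp⟩
    · exact ⟨N, Set.mem_insert _ _, h⟩

lemma aux_exists_normal_pgroup [Finite G] {N : Subgroup G} (hN : N.Normal)
    (hnil : Group.IsNilpotent ↥N) {p : ℕ} (hp : Fact p.Prime) (hdvd : p ∣ Nat.card ↥N) :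
    ∃ T : Subgroup G, T.Normal ∧ IsPGroup p ↥T ∧ ∃ z : G, z ∈ T ∧ z ≠ 1 := by
  haveI := hN
  haveI := hp
  haveI : Fintype ↥N := Fintype.ofFinite _
  obtain ⟨g, hg⟩ := exists_prime_orderOf_dvd_card (G := ↥N) p
    (by rwa [← Nat.card_eq_fintype_card])
  have hpg : IsPGroup p ↥(Subgroup.zpowers g) :=
    IsPGroup.of_card (by rw [Nat.card_zpowers, hg, pow_one])
  obtain ⟨Q, hQ⟩ := hpg.exists_le_sylow
  have htfae := (isNilpotent_of_finite_tfae (G := ↥N)).out 0 3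
  have hQn : (↑Q : Subgroup ↥N).Normal := htfae.mp hnil p hp Q
  haveI := hQn
  haveI : (↑Q : Subgroup ↥N).Characteristic := Sylow.characteristic_of_normal Q hQn
  refine ⟨(↑Q : Subgroup ↥N).map N.subtype, inferInstance, Q.isPGroup'.map _,
    (g : G), ?_, ?_⟩
  · exact Subgroup.mem_map_of_mem _ (hQ (Subgroup.mem_zpowers g))
  · intro h
    have hg1 : g = 1 := Subtype.ext h
    rw [hg1, orderOf_one] at hg
    exact hp.out.one_lt.ne' hg.symm

end AuxNil

/-- If every prime dividing |G| divides |Fit(G)| and Γ(G) is connected, diam ≤ 5. -/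
theorem stmt_16 (G : Type*) [Group G] [Finite G] (hsolv : IsSolvable G)
    (hZ : Subgroup.center G = ⊥)
    (hπ : ∀ p : ℕ, p.Prime → p ∣ Nat.card G → p ∣ Nat.card (fitting G))
    (hc : (nilGraph G).Connected) :
    (nilGraph G).diam ≤ 5 := by
  classical
  -- The hypercenter is trivial.
  have hucs : ∀ n, Subgroup.upperCentralSeries G n = ⊥ := by
    intro n
    induction n with
    | zero => exact Subgroup.upperCentralSeries_zero G
    | succ n ih =>
      refine le_antisymm ?_ bot_le
      intro x hx
      rw [Subgroup.mem_upperCentralSeries_succ_iff] at hx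
      have hxc : x ∈ Subgroup.center G := by
        rw [Subgroup.mem_center_iff]
        intro y
        have h := hx y
        rw [ih, Subgroup.mem_bot, commutatorElement_def, mul_inv_eq_one] at h
        calc y * x = (x * y * x⁻¹) * x := by rw [h]
          _ = x * y := by group
      rwa [hZ] at hxc
  have hhyp : hypercenter G = ⊥ := hucs _
  -- building vertices
  have hmk : ∀ z : G, z ≠ 1 → z ∉ hypercenter G := by
    intro z hz h
    rw [hhyp, Subgroup.mem_bot] at h
    exact hz h
  -- one-step distance bound
  have hstep : ∀ (a b : {x : G // x ∉ hypercenter G}),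
      Group.IsNilpotent ↥(Subgroup.closure ({a.1, b.1} : Set G)) →
      (nilGraph G).edist a b ≤ 1 := by
    intro a b hnil
    by_cases hab : a = b
    · subst hab
      simp [SimpleGraph.edist_self]
    · have hadj : (nilGraph G).Adj a b := ⟨hab, hnil⟩
      have := SimpleGraph.edist_le (SimpleGraph.Walk.cons hadj SimpleGraph.Walk.nil)
      simpa using this
  -- key: for every prime dividing |G|, a nontrivial normal p-subgroup.
  have key : ∀ p : ℕ, p.Prime → p ∣ Nat.card G →
      ∃ T : Subgroup G, T.Normal ∧ IsPGroup p ↥T ∧ ∃ z : G, z ∈ T ∧ z ≠ 1 := by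
    intro p hp hdvd
    have h1 := hπ p hp hdvd
    unfold fitting at h1
    obtain ⟨N, hNS, hNd⟩ := aux_sSup_prime_dvd (fun N hN => hN.1) hp h1
    exact aux_exists_normal_pgroup hNS.1 hNS.2 ⟨hp⟩ hNd
  -- distance between any two vertices is at most 5
  suffices h5 : ∀ u v : {x : G // x ∉ hypercenter G}, (nilGraph G).edist u v ≤ 5 by
    have hd : (nilGraph G).ediam ≤ 5 := SimpleGraph.ediam_le_of_edist_le h5
    calc (nilGraph G).diam = (nilGraph G).ediam.toNat := rfl
      _ ≤ (5 : ℕ∞).toNat := ENat.toNat_le_toNat hd (by simp)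
      _ = 5 := rfl
  intro u v
  obtain ⟨x, hxmem⟩ := u
  obtain ⟨y, hymem⟩ := v
  have hx1 : x ≠ 1 := fun h => hxmem (by rw [hhyp, Subgroup.mem_bot]; exact h)
  have hy1 : y ≠ 1 := fun h => hymem (by rw [hhyp, Subgroup.mem_bot]; exact h)
  have hox : orderOf x ≠ 1 := fun h => hx1 (orderOf_eq_one_iff.mp h)
  have hoy : orderOf y ≠ 1 := fun h => hy1 (orderOf_eq_one_iff.mp h)
  have hox0 : orderOf x ≠ 0 := ((isOfFinOrder_of_finite x).orderOf_pos).ne'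
  have hoy0 : orderOf y ≠ 0 := ((isOfFinOrder_of_finite y).orderOf_pos).ne'
  set p := (orderOf x).minFac with hpdef
  set q := (orderOf y).minFac with hqdef
  have hp : p.Prime := Nat.minFac_prime hox
  have hq : q.Prime := Nat.minFac_prime hoy
  haveI : Fact p.Prime := ⟨hp⟩
  haveI : Fact q.Prime := ⟨hq⟩
  have hpd : p ∣ orderOf x := Nat.minFac_dvd _
  have hqd : q ∣ orderOf y := Nat.minFac_dvd _
  obtain ⟨T, hTn, hTp, z, hzT, hz1⟩ := key p hp (hpd.trans (orderOf_dvd_natCard x))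
  obtain ⟨S, hSn, hSq, w, hwS, hw1⟩ := key q hq (hqd.trans (orderOf_dvd_natCard y))
  haveI := hTn
  haveI := hSn
  set a := x ^ (orderOf x / p) with hadef
  set b := y ^ (orderOf y / q) with hbdef
  have ha : orderOf a = p := orderOf_pow_orderOf_div hox0 hpd
  have hb : orderOf b = q := orderOf_pow_orderOf_div hoy0 hqd
  have ha1 : a ≠ 1 := fun h => hp.one_lt.ne' (by rw [← ha, h, orderOf_one])
  have hb1 : b ≠ 1 := fun h => hq.one_lt.ne' (by rw [← hb, h, orderOf_one])
  have hPa : IsPGroup p ↥(Subgroup.zpowers a) :=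
    IsPGroup.of_card (by rw [Nat.card_zpowers, ha, pow_one])
  have hPb : IsPGroup q ↥(Subgroup.zpowers b) :=
    IsPGroup.of_card (by rw [Nat.card_zpowers, hb, pow_one])
  -- the five intermediate nilpotency facts
  have e1 : Group.IsNilpotent ↥(Subgroup.closure ({x, a} : Set G)) :=
    aux_nil_closure_pair_of_commute ((Commute.refl x).pow_right _).eq
  have e5 : Group.IsNilpotent ↥(Subgroup.closure ({b, y} : Set G)) :=
    aux_nil_closure_pair_of_commute (((Commute.refl y).pow_left _).eq)
  clear hpdef hqdef hadef hbdef
  clear_value p q a b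
  have e2 : Group.IsNilpotent ↥(Subgroup.closure ({a, z} : Set G)) := by
    have hsup : IsPGroup p ↥(Subgroup.zpowers a ⊔ T) :=
      IsPGroup.to_sup_of_normal_right hPa hTp
    refine aux_nil_of_le ?_ hsup.isNilpotent
    rw [Subgroup.closure_le]
    exact Set.insert_subset_iff.mpr
      ⟨Subgroup.mem_sup_left (Subgroup.mem_zpowers a),
       Set.singleton_subset_iff.mpr (Subgroup.mem_sup_right hzT)⟩
  have e4 : Group.IsNilpotent ↥(Subgroup.closure ({w, b} : Set G)) := by
    have hsup : IsPGroup q ↥(Subgroup.zpowers b ⊔ S) :=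
      IsPGroup.to_sup_of_normal_right hPb hSq
    refine aux_nil_of_le ?_ hsup.isNilpotent
    rw [Subgroup.closure_le]
    exact Set.insert_subset_iff.mpr
      ⟨Subgroup.mem_sup_right hwS,
       Set.singleton_subset_iff.mpr (Subgroup.mem_sup_left (Subgroup.mem_zpowers b))⟩
  have e3 : Group.IsNilpotent ↥(Subgroup.closure ({z, w} : Set G)) := by
    by_cases hpq : p = q
    · subst hpq
      have hsup : IsPGroup p ↥(T ⊔ S) := IsPGroup.to_sup_of_normal_right hTp hSq
      refine aux_nil_of_le ?_ hsup.isNilpotent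
      rw [Subgroup.closure_le]
      exact Set.insert_subset_iff.mpr
        ⟨Subgroup.mem_sup_left hzT, Set.singleton_subset_iff.mpr (Subgroup.mem_sup_right hwS)⟩
    · have hdisj : Disjoint T S := IsPGroup.disjoint_of_ne p q hpq T S hTp hSq
      have hcomm : z * w = w * z := by
        have hmemT : z * w * z⁻¹ * w⁻¹ ∈ T := by
          have h1 : w * z⁻¹ * w⁻¹ ∈ T := hTn.conj_mem z⁻¹ (T.inv_mem hzT) w
          have : z * (w * z⁻¹ * w⁻¹) ∈ T := T.mul_mem hzT h1
          simpa [mul_assoc] using this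
        have hmemS : z * w * z⁻¹ * w⁻¹ ∈ S := by
          have h1 : z * w * z⁻¹ ∈ S := hSn.conj_mem w hwS z
          exact S.mul_mem h1 (S.inv_mem hwS)
        have hbot : z * w * z⁻¹ * w⁻¹ ∈ (⊥ : Subgroup G) :=
          (disjoint_iff.mp hdisj) ▸ (Subgroup.mem_inf.mpr ⟨hmemT, hmemS⟩)
        rw [Subgroup.mem_bot, mul_inv_eq_one] at hbot
        calc z * w = (z * w * z⁻¹) * z := by group
          _ = w * z := by rw [hbot]
      exact aux_nil_closure_pair_of_commute hcomm
  -- assemble the path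
  let U : {g : G // g ∉ hypercenter G} := ⟨x, hxmem⟩
  let V : {g : G // g ∉ hypercenter G} := ⟨y, hymem⟩
  let A : {g : G // g ∉ hypercenter G} := ⟨a, hmk a ha1⟩
  let Zv : {g : G // g ∉ hypercenter G} := ⟨z, hmk z hz1⟩
  let W : {g : G // g ∉ hypercenter G} := ⟨w, hmk w hw1⟩
  let B : {g : G // g ∉ hypercenter G} := ⟨b, hmk b hb1⟩
  have d1 : (nilGraph G).edist U A ≤ 1 := hstep U A e1
  have d2 : (nilGraph G).edist A Zv ≤ 1 := hstep A Zv e2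
  have d3 : (nilGraph G).edist Zv W ≤ 1 := hstep Zv W e3
  have d4 : (nilGraph G).edist W B ≤ 1 := hstep W B e4
  have d5 : (nilGraph G).edist B V ≤ 1 := hstep B V e5
  calc (nilGraph G).edist U V
      ≤ (nilGraph G).edist U A + (nilGraph G).edist A V := SimpleGraph.edist_triangle
    _ ≤ (nilGraph G).edist U A + ((nilGraph G).edist A Zv + (nilGraph G).edist Zv V) :=
        add_le_add_right SimpleGraph.edist_triangle _
    _ ≤ (nilGraph G).edist U A + ((nilGraph G).edist A Zv +
          ((nilGraph G).edist Zv W + (nilGraph G).edist W V)) := by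
        gcongr
        exact SimpleGraph.edist_triangle
    _ ≤ (nilGraph G).edist U A + ((nilGraph G).edist A Zv +
          ((nilGraph G).edist Zv W + ((nilGraph G).edist W B + (nilGraph G).edist B V))) := by
        gcongr
        exact SimpleGraph.edist_triangle
    _ ≤ 1 + (1 + (1 + (1 + 1))) := by gcongr
    _ = 5 := by norm_num
end
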